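/- Let v : ℝ → ℝ be positive and continuous, let ℓ > 0, and let P : ℝ → (0,1) be continuously differentiable. Suppose there is a constant t_p such that ∫_x^{x+ℓ/P(x)} 1/v(A^P(z)) dz = t_p for all x ∈ ℝ, where A^P is continuous. Then P satisfies (1 - ℓP'(x)/P(x)²)·(1/v(A^P(x + ℓ/P(x)))) = 1/v(A^P(x)) for all x ∈ ℝ. -/

import Mathlib

theorem period_implies_profile_equation
    (v : ℝ → ℝ) (hv_pos : ∀ y, 0 < v y) (hv_cont : Continuous v)
    (ℓ : ℝ) (hℓ : 0 < ℓ)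
    (P P' : ℝ → ℝ)
    (hP : ∀ x, 0 < P x ∧ P x < 1)
    (hPderiv : ∀ x, HasDerivAt P (P' x) x)
    (hP'cont : Continuous P')
    (A : ℝ → ℝ) (hA_cont : Continuous A)
    (tp : ℝ)
    (hperiod : ∀ x : ℝ, ∫ z in x..(x + ℓ / P x), 1 / v (A z) = tp) :
    ∀ x : ℝ, (1 - ℓ * P' x / (P x) ^ 2) * (1 / v (A (x + ℓ / P x)))
      = 1 / v (A x) := by
  intro x
  set f : ℝ → ℝ := fun z => 1 / v (A z) with hf_def
  have hf_cont : Continuous f := by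
    apply Continuous.div continuous_const (hv_cont.comp hA_cont)
    intro z; exact (hv_pos (A z)).ne'
  -- F y = ∫_0^y f, has derivative f y everywhere
  have hF : ∀ y : ℝ, HasDerivAt (fun t => ∫ z in (0:ℝ)..t, f z) (f y) y := by
    intro y
    exact intervalIntegral.integral_hasDerivAt_right
      (hf_cont.intervalIntegrable 0 y)
      (hf_cont.stronglyMeasurableAtFilter _ _)
      hf_cont.continuousAt
  set L : ℝ → ℝ := fun x => x + ℓ / P x with hL_def
  have hL : HasDerivAt L (1 - ℓ * P' x / (P x) ^ 2) x := by
    have h1 : HasDerivAt (fun x => ℓ / P x) (ℓ * (-(P' x) / (P x) ^ 2)) x := by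
      simpa [div_eq_mul_inv] using ((hPderiv x).inv (hP x).1.ne').const_mul ℓ
    have := (hasDerivAt_id x).add h1
    exact this.congr_deriv (by ring)
  -- G = F ∘ L - F has derivative L' * f (L x) - f x, and G is constant tp
  have hG : HasDerivAt (fun x => (∫ z in (0:ℝ)..(L x), f z) - ∫ z in (0:ℝ)..x, f z)
      ((1 - ℓ * P' x / (P x) ^ 2) * f (L x) - f x) x := by
    have h1 := (hF (L x)).comp x hL
    have h2 := hF x
    exact (h1.sub h2).congr_deriv (by ring)
  have hconst : (fun x => (∫ z in (0:ℝ)..(L x), f z) - ∫ z in (0:ℝ)..x, f z)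
      = fun _ => tp := by
    funext y
    have := hperiod y
    rw [← this, ← intervalIntegral.integral_add_adjacent_intervals
      (hf_cont.intervalIntegrable 0 y) (hf_cont.intervalIntegrable y (L y))]
    simp [hL_def]
  rw [hconst] at hG
  have h0 : (1 - ℓ * P' x / (P x) ^ 2) * f (L x) - f x = 0 := by
    have := (hasDerivAt_const x tp).unique hG
    linarith
  have : (1 - ℓ * P' x / (P x) ^ 2) * f (L x) = f x := by linarith
  simpa [hf_def, hL_def] using this
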